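/- Let r ≥ 2, let G be a graph, and let h : H_r → G be a flat topological embedding of the hexagonal grid H_r into G. Then for every i with 2 ≤ i ≤ r, both the graph K_i and the graph I_i := K_i ∖ h(C_i) (obtained from K_i by deleting all vertices of h(C_i) and all edges incident with them) are connected planar graphs. -/

import Mathlib

lemma sym2_out_eq {α : Type} (s : Sym2 α) : s = s((Quot.out s).1, (Quot.out s).2) := by
  exact (Quot.out_eq s).symm

lemma sym2_out_fst_mem {α : Type} (s : Sym2 α) : (Quot.out s).1 ∈ s := by
  set p := Quot.out s with hp
  rw [sym2_out_eq s, ← hp]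
  exact Sym2.mem_mk_left _ _

lemma sym2_out_snd_mem {α : Type} (s : Sym2 α) : (Quot.out s).2 ∈ s := by
  set p := Quot.out s with hp
  rw [sym2_out_eq s, ← hp]
  exact Sym2.mem_mk_right _ _

lemma sym2_out_ne {α : Type} (s : Sym2 α) (h : ¬ s.IsDiag) : (Quot.out s).1 ≠ (Quot.out s).2 := by
  intro he
  exact h (by rw [sym2_out_eq s]; exact Sym2.mk_isDiag_iff.mpr he)

/-! ### Basic multigraphs -/

/-- A multigraph: undirected, loop-free, possibly with multiple (parallel) edges.
Each edge is assigned its unordered pair of (distinct) endpoints. -/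
structure MGraph where
  V : Type
  E : Type
  ends : E → Sym2 V
  loopless : ∀ e : E, ¬ (ends e).IsDiag

namespace MGraph

/-- Walks in a multigraph. -/
inductive Walk (G : MGraph) : G.V → G.V → Type where
  | nil (v : G.V) : Walk G v v
  | cons {u v w : G.V} (e : G.E) (he : G.ends e = s(u, v)) (p : Walk G v w) : Walk G u w

namespace Walk

variable {G : MGraph}

/-- The list of vertices visited by a walk (in order, including both endpoints). -/
def support : ∀ {u v : G.V}, G.Walk u v → List G.V
  | u, _, .nil _ => [u]
  | u, _, .cons _ _ p => u :: p.support

/-- The list of edges traversed by a walk. -/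
def edgeList : ∀ {u v : G.V}, G.Walk u v → List G.E
  | _, _, .nil _ => []
  | _, _, .cons e _ p => e :: p.edgeList

lemma start_mem_support : ∀ {u v : G.V} (w : G.Walk u v), u ∈ w.support
  | _, _, .nil _ => List.mem_singleton_self _
  | _, _, .cons _ _ _ => List.mem_cons_self

lemma end_mem_support : ∀ {u v : G.V} (w : G.Walk u v), v ∈ w.support
  | _, _, .nil _ => List.mem_singleton_self _
  | _, _, .cons _ _ p => List.mem_cons_of_mem _ (end_mem_support p)

lemma mem_support_of_mem_edgeList :
    ∀ {u v : G.V} (w : G.Walk u v) (f : G.E) (x : G.V),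
      f ∈ w.edgeList → x ∈ G.ends f → x ∈ w.support
  | _, _, .nil _, f, x, hf, _ => by simp [edgeList] at hf
  | u, v, .cons e he p, f, x, hf, hx => by
      rcases List.mem_cons.mp hf with h | h
      · subst h
        rw [he, Sym2.mem_iff] at hx
        rcases hx with rfl | rfl
        · exact start_mem_support _
        · exact List.mem_cons_of_mem _ (start_mem_support p)
      · exact List.mem_cons_of_mem _ (mem_support_of_mem_edgeList p f x h hx)

/-- A walk is a path if it visits no vertex twice. -/
def IsPath {u v : G.V} (w : G.Walk u v) : Prop := w.support.Nodup

/-- A closed walk is a cycle if it is nontrivial, repeats no edge,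
and repeats no vertex except the first = last one. -/
def IsCycleW {u : G.V} (w : G.Walk u u) : Prop :=
  w.edgeList ≠ [] ∧ w.edgeList.Nodup ∧ w.support.tail.Nodup

end Walk

/-! ### Subgraphs -/

/-- A subgraph of `G`, given by a set of vertices and a set of edges all of whose
endpoints belong to the vertex set. -/
structure Subgraph (G : MGraph) where
  verts : Set G.V
  edges : Set G.E
  closed : ∀ e ∈ edges, ∀ v ∈ G.ends e, v ∈ verts

namespace Subgraph

variable {G : MGraph}

/-- The subgraph consisting of all of `G`. -/
def top (G : MGraph) : G.Subgraph where
  verts := Set.univ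
  edges := Set.univ
  closed := fun _ _ _ _ => Set.mem_univ _

/-- Union of two subgraphs. -/
def union (A B : G.Subgraph) : G.Subgraph where
  verts := A.verts ∪ B.verts
  edges := A.edges ∪ B.edges
  closed := by
    rintro e (he | he) v hv
    · exact Or.inl (A.closed e he v hv)
    · exact Or.inr (B.closed e he v hv)

/-- Union of a set of subgraphs. -/
def sUnion (𝒮 : Set G.Subgraph) : G.Subgraph where
  verts := ⋃ S ∈ 𝒮, S.verts
  edges := ⋃ S ∈ 𝒮, S.edges
  closed := by
    intro e he v hv
    simp only [Set.mem_iUnion] at he ⊢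
    obtain ⟨S, hS, heS⟩ := he
    exact ⟨S, hS, S.closed e heS v hv⟩

/-- Delete a set of vertices (and all edges touching them) from a subgraph. -/
def delete (S : G.Subgraph) (A : Set G.V) : G.Subgraph where
  verts := S.verts \ A
  edges := {e ∈ S.edges | ∀ v ∈ G.ends e, v ∉ A}
  closed := fun e he v hv => ⟨S.closed e he.1 v hv, he.2 v hv⟩

/-- The subgraph, viewed as a graph in its own right. -/
def toGraph (S : G.Subgraph) : MGraph where
  V := {v : G.V // v ∈ S.verts}
  E := {e : G.E // e ∈ S.edges}
  ends := fun e => (G.ends e.val).attachWith (fun v hv => S.closed e.val e.2 v hv)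
  loopless := by
    intro e he
    have h2 := Sym2.IsDiag.map (f := Subtype.val) he
    rw [Sym2.attachWith_map_subtypeVal] at h2
    exact G.loopless e.val h2

lemma toGraph_ends {S : G.Subgraph} (e : S.toGraph.E) {v w : G.V}
    (hvw : G.ends e.val = s(v, w)) (hv : v ∈ S.verts) (hw : w ∈ S.verts) :
    S.toGraph.ends e = s((⟨v, hv⟩ : {v : G.V // v ∈ S.verts}), ⟨w, hw⟩) := by
  apply Sym2.map.injective Subtype.val_injective
  show Sym2.map Subtype.val ((G.ends e.val).attachWith _) = _
  rw [Sym2.attachWith_map_subtypeVal, Sym2.map_pair_eq, hvw]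

lemma toGraph_mem_ends {S : G.Subgraph} (e : S.toGraph.E) (x : S.toGraph.V) :
    x ∈ S.toGraph.ends e ↔ x.val ∈ G.ends e.val := by
  constructor
  · intro hx
    have h2 : x.val ∈ Sym2.map Subtype.val (S.toGraph.ends e) :=
      Sym2.mem_map.mpr ⟨x, hx, rfl⟩
    rwa [show Sym2.map Subtype.val (S.toGraph.ends e) = G.ends e.val from
      Sym2.attachWith_map_subtypeVal _] at h2
  · intro hx
    have h2 : x.val ∈ Sym2.map Subtype.val (S.toGraph.ends e) := by
      rwa [show Sym2.map Subtype.val (S.toGraph.ends e) = G.ends e.val from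
        Sym2.attachWith_map_subtypeVal _]
    obtain ⟨y, hy, hyx⟩ := Sym2.mem_map.mp h2
    rwa [show y = x from Subtype.ext hyx] at hy

/-- Reachability within a subgraph: a walk of `G` all of whose vertices and
edges belong to the subgraph. -/
def Reach (S : G.Subgraph) (u v : G.V) : Prop :=
  ∃ w : G.Walk u v, (∀ x ∈ w.support, x ∈ S.verts) ∧ ∀ e ∈ w.edgeList, e ∈ S.edges

/-- A subgraph is connected if it is nonempty and any two of its vertices are
joined by a walk inside it. -/
def Connected (S : G.Subgraph) : Prop :=
  S.verts.Nonempty ∧ ∀ u ∈ S.verts, ∀ v ∈ S.verts, S.Reach u v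

end Subgraph

/-- The induced subgraph on a vertex set `A`. -/
def induce (G : MGraph) (A : Set G.V) : G.Subgraph where
  verts := A
  edges := {e | ∀ v ∈ G.ends e, v ∈ A}
  closed := fun _ he v hv => he v hv

/-- `G ∖ A`: delete the vertices in `A`, keeping only edges with no endpoint in `A`. -/
def deleteVerts (G : MGraph) (A : Set G.V) : G.Subgraph :=
  G.induce Aᶜ

end MGraph
/-! ### Drawings in the plane -/

/-- A drawing of a graph in the plane.  Every vertex is assigned a point and every
edge a simple curve (given by an injective continuous parametrization on `[0,1]`)
joining the images of its endpoints; distinct vertices get distinct points;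
distinct edge curves meet in at most one interior point; no curve passes through the
image of a vertex other than its endpoints; and no point which is not the image of a
vertex lies on more than two edge curves. -/
structure Drawing (G : MGraph) where
  vpos : G.V → ℝ × ℝ
  par : G.E → ℝ → ℝ × ℝ
  par_cont : ∀ e, ContinuousOn (par e) (Set.Icc 0 1)
  par_inj : ∀ e, Set.InjOn (par e) (Set.Icc 0 1)
  ends_match : ∀ e, ∃ v w : G.V, G.ends e = s(v, w) ∧ par e 0 = vpos v ∧ par e 1 = vpos w
  vpos_inj : Function.Injective vpos
  arcs_inter : ∀ e f : G.E, e ≠ f →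
    Set.Subsingleton (par e '' Set.Ioo 0 1 ∩ par f '' Set.Ioo 0 1)
  vertex_on_arc : ∀ (e : G.E) (v : G.V), vpos v ∈ par e '' Set.Icc 0 1 → v ∈ G.ends e
  at_most_two : ∀ x : ℝ × ℝ, x ∉ Set.range vpos →
    ∀ e₁ e₂ e₃ : G.E, x ∈ par e₁ '' Set.Icc 0 1 → x ∈ par e₂ '' Set.Icc 0 1 →
      x ∈ par e₃ '' Set.Icc 0 1 → e₁ = e₂ ∨ e₁ = e₃ ∨ e₂ = e₃

namespace Drawing

variable {G : MGraph}

/-- The curve drawn for the edge `e`. -/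
def arc (Δ : Drawing G) (e : G.E) : Set (ℝ × ℝ) := Δ.par e '' Set.Icc 0 1

/-- A crossing of a drawing: a point which is not the image of a vertex and lies on
two distinct edge curves. -/
def IsCrossing (Δ : Drawing G) (x : ℝ × ℝ) : Prop :=
  x ∉ Set.range Δ.vpos ∧ ∃ e f : G.E, e ≠ f ∧ x ∈ Δ.arc e ∧ x ∈ Δ.arc f

/-- The set of crossings of a drawing. -/
def crossings (Δ : Drawing G) : Set (ℝ × ℝ) := {x | Δ.IsCrossing x}

/-- The drawing has at most `k` crossings. -/
def CrossingsAtMost (Δ : Drawing G) (k : ℕ) : Prop :=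
  Δ.crossings.Finite ∧ Δ.crossings.ncard ≤ k

/-- The edge `e` is involved in some crossing of the drawing. -/
def Involved (Δ : Drawing G) (e : G.E) : Prop :=
  ∃ x : ℝ × ℝ, Δ.IsCrossing x ∧ x ∈ Δ.arc e

/-- An `l`-good drawing with respect to a set `F` of forbidden edges:
at most `l` crossings, and no forbidden edge is involved in any crossing. -/
def IsGood (Δ : Drawing G) (l : ℕ) (F : Set G.E) : Prop :=
  Δ.CrossingsAtMost l ∧ ∀ e ∈ F, ¬ Δ.Involved e

/-- The image of a subgraph under a drawing: all vertex points and edge curves of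
the subgraph. -/
def subImage (Δ : Drawing G) (S : G.Subgraph) : Set (ℝ × ℝ) :=
  Δ.vpos '' S.verts ∪ ⋃ e ∈ S.edges, Δ.arc e

/-- The restriction of a drawing to a subgraph. -/
def restrict (Δ : Drawing G) (S : G.Subgraph) : Drawing S.toGraph where
  vpos := fun v => Δ.vpos v.val
  par := fun e => Δ.par e.val
  par_cont := fun e => Δ.par_cont e.val
  par_inj := fun e => Δ.par_inj e.val
  ends_match := by
    intro e
    obtain ⟨v, w, hvw, h0, h1⟩ := Δ.ends_match e.val
    have hv : v ∈ S.verts := S.closed e.val e.2 v (by rw [hvw]; exact Sym2.mem_mk_left _ _)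
    have hw : w ∈ S.verts := S.closed e.val e.2 w (by rw [hvw]; exact Sym2.mem_mk_right _ _)
    exact ⟨⟨v, hv⟩, ⟨w, hw⟩, MGraph.Subgraph.toGraph_ends e hvw hv hw, h0, h1⟩
  vpos_inj := fun v w h => Subtype.ext (Δ.vpos_inj h)
  arcs_inter := fun e f hef =>
    Δ.arcs_inter e.val f.val (fun h => hef (Subtype.ext h))
  vertex_on_arc := by
    intro e v hv
    exact (MGraph.Subgraph.toGraph_mem_ends e v).mpr (Δ.vertex_on_arc e.val v.val hv)
  at_most_two := by
    intro x hx e₁ e₂ e₃ h₁ h₂ h₃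
    by_cases hxr : x ∈ Set.range Δ.vpos
    · obtain ⟨u, hu⟩ := hxr
      have hu1 : u ∈ G.ends e₁.val := Δ.vertex_on_arc e₁.val u (by rw [hu]; exact h₁)
      have huS : u ∈ S.verts := S.closed e₁.val e₁.2 u hu1
      exact absurd ⟨⟨u, huS⟩, hu⟩ hx
    · rcases Δ.at_most_two x hxr e₁.val e₂.val e₃.val h₁ h₂ h₃ with h | h | h
      · exact Or.inl (Subtype.ext h)
      · exact Or.inr (Or.inl (Subtype.ext h))
      · exact Or.inr (Or.inr (Subtype.ext h))

end Drawing

namespace MGraph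

/-- A graph is planar if it has a drawing without crossings. -/
def IsPlanar (G : MGraph) : Prop := ∃ Δ : Drawing G, Δ.crossings = ∅

/-- The crossing number of `G` is at most `k`. -/
def CrossingNumberLE (G : MGraph) (k : ℕ) : Prop :=
  ∃ Δ : Drawing G, Δ.CrossingsAtMost k

end MGraph

/-- A simple closed curve in the plane: a continuous injective image of a circle. -/
def IsSimpleClosedCurve (s : Set (ℝ × ℝ)) : Prop :=
  ∃ f : AddCircle (1 : ℝ) → ℝ × ℝ, Continuous f ∧ Function.Injective f ∧ Set.range f = s
/-! ### H-components -/

namespace MGraph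

variable {G : MGraph}

/-- The subgraph consisting of a single edge together with its endpoints. -/
def edgeComp (G : MGraph) (e : G.E) : G.Subgraph where
  verts := {v | v ∈ G.ends e}
  edges := {e}
  closed := by
    rintro f rfl v hv
    exact hv

/-- For a subgraph `H` of `G` and a vertex `u ∉ H`, the `H`-component of `G`
determined by `u`: the connected component of `G ∖ H` containing `u`, together with
all edges joining it to `H` and their endpoints in `H`. -/
def attachComp (G : MGraph) (H : G.Subgraph) (u : G.V) : G.Subgraph where
  verts := {v | (G.deleteVerts H.verts).Reach u v} ∪
    {v | v ∈ H.verts ∧ ∃ (e : G.E) (w : G.V), G.ends e = s(w, v) ∧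
      (G.deleteVerts H.verts).Reach u w}
  edges := {e | e ∈ (G.deleteVerts H.verts).edges ∧
      ∀ v ∈ G.ends e, (G.deleteVerts H.verts).Reach u v} ∪
    {e | ∃ (w v : G.V), G.ends e = s(w, v) ∧ (G.deleteVerts H.verts).Reach u w ∧
      v ∈ H.verts}
  closed := by
    rintro e (⟨-, he⟩ | ⟨w, v, hwv, hw, hv⟩) x hx
    · exact Or.inl (he x hx)
    · rw [hwv, Sym2.mem_iff] at hx
      rcases hx with rfl | rfl
      · exact Or.inl hw
      · exact Or.inr ⟨hv, e, w, hwv, hw⟩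

/-- `C` is an `H`-component of `G`: either a connected component of `G ∖ H` together
with the edges joining it to `H` and their endpoints in `H`, or a single edge of
`G` outside `H` with both endpoints in `H`, together with its endpoints. -/
def IsHComp (G : MGraph) (H C : G.Subgraph) : Prop :=
  (∃ u : G.V, u ∉ H.verts ∧ C = G.attachComp H u) ∨
  (∃ e : G.E, e ∉ H.edges ∧ (∀ v ∈ G.ends e, v ∈ H.verts) ∧ C = G.edgeComp e)

/-! ### Graph embeddings (subgraph copies) -/

/-- An embedding of the graph `H` into the graph `G`: injective maps on vertices and
edges that respect endpoints.  The image is a subgraph of `G` isomorphic to `H`. -/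
structure Emb (H G : MGraph) where
  vmap : H.V → G.V
  emap : H.E → G.E
  vmap_inj : Function.Injective vmap
  emap_inj : Function.Injective emap
  ends_map : ∀ e : H.E, G.ends (emap e) = (H.ends e).map vmap

end MGraph

/-! ### Topological embeddings -/

/-- A topological embedding of `H` into `G`: an injective map on vertices together
with, for every edge `e` of `H`, a path in `G` (recorded by its vertex set
`pVerts e` and edge set `pEdges e`) joining the images of the endpoints of `e` and
avoiding the images of all other vertices, such that the paths of distinct edges are
internally disjoint. -/
structure TopEmb (H G : MGraph) where
  vmap : H.V → G.V
  vmap_inj : Function.Injective vmap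
  pVerts : H.E → Set G.V
  pEdges : H.E → Set G.E
  is_path : ∀ e : H.E, ∃ (a b : H.V) (w : G.Walk (vmap a) (vmap b)),
    H.ends e = s(a, b) ∧ w.IsPath ∧
    pVerts e = {x | x ∈ w.support} ∧ pEdges e = {f | f ∈ w.edgeList} ∧
    ∀ u : H.V, u ∉ H.ends e → vmap u ∉ w.support
  int_disjoint : ∀ e f : H.E, e ≠ f → ∀ x ∈ pVerts e ∩ pVerts f,
    ∃ a : H.V, a ∈ H.ends e ∧ a ∈ H.ends f ∧ x = vmap a
  edge_disjoint : ∀ e f : H.E, e ≠ f → pEdges e ∩ pEdges f = ∅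

namespace TopEmb

variable {H G : MGraph}

/-- The image `h(S)` of a subgraph `S ⊆ H` under a topological embedding `h`. -/
def imageOf (h : TopEmb H G) (S : H.Subgraph) : G.Subgraph where
  verts := (h.vmap '' S.verts) ∪ ⋃ e ∈ S.edges, h.pVerts e
  edges := ⋃ e ∈ S.edges, h.pEdges e
  closed := by
    intro f hf v hv
    simp only [Set.mem_iUnion] at hf
    obtain ⟨e, he, hfe⟩ := hf
    obtain ⟨a, b, w, -, -, hV, hE, -⟩ := h.is_path e
    right
    simp only [Set.mem_iUnion]
    refine ⟨e, he, ?_⟩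
    rw [hV]
    rw [hE] at hfe
    exact MGraph.Walk.mem_support_of_mem_edgeList w f v hfe hv

/-- The image `h(H)` of a topological embedding. -/
def image (h : TopEmb H G) : G.Subgraph := h.imageOf (MGraph.Subgraph.top H)

end TopEmb
/-! ### Hexagonal grids -/

/-- The vertex type of the hexagonal grid of radius `r`: the vertices are arranged on
`r` concentric principal cycles, the `i`-th of which (counting from the inside,
starting at `i = 0`) has `6 * (2 * i + 1)` vertices. -/
abbrev HexV (r : ℕ) : Type := (i : Fin r) × ZMod (6 * (2 * i.val + 1))

/-- The endpoint on the `i`-th principal cycle of the `k`-th spoke joining the `i`-th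
and the `(i+1)`-st principal cycle. -/
def spokeOutV (r : ℕ) (i : Fin (r - 1)) (k : ℕ) : HexV r :=
  ⟨⟨i.val, by have := i.isLt; omega⟩,
    ((k / (i.val + 1)) * (2 * i.val + 1) + 2 * (k % (i.val + 1)) : ℕ)⟩

/-- The endpoint on the `(i+1)`-st principal cycle of the `k`-th spoke joining the
`i`-th and the `(i+1)`-st principal cycle. -/
def spokeInV (r : ℕ) (i : Fin (r - 1)) (k : ℕ) : HexV r :=
  ⟨⟨i.val + 1, by have := i.isLt; omega⟩,
    ((k / (i.val + 1)) * (2 * (i.val + 1) + 1) + 2 * (k % (i.val + 1)) + 1 : ℕ)⟩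

/-- The hexagonal grid of radius `r` (`r` concentric cycles of hexagons): its vertices
lie on `r` principal cycles, the `i`-th principal cycle (0-indexed) having
`6 * (2 * i + 1)` vertices and being joined to the next one by `6 * (i + 1)` spokes
attached alternatingly. -/
def hexGrid (r : ℕ) : MGraph where
  V := HexV r
  E := ((i : Fin r) × ZMod (6 * (2 * i.val + 1))) ⊕ ((i : Fin (r - 1)) × ZMod (6 * (i.val + 1)))
  ends := fun e => match e with
    | .inl ⟨i, j⟩ => s((⟨i, j⟩ : HexV r), ⟨i, j + 1⟩)
    | .inr ⟨i, k⟩ => s(spokeOutV r i k.val, spokeInV r i k.val)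
  loopless := by
    rintro (⟨i, j⟩ | ⟨i, k⟩) h
    · rw [Sym2.mk_isDiag_iff] at h
      have hj : j = j + 1 := eq_of_heq (Sigma.ext_iff.mp h).2
      have h1 : (1 : ZMod (6 * (2 * i.val + 1))) = 0 := left_eq_add.mp hj
      haveI : Fact (1 < 6 * (2 * i.val + 1)) := ⟨by omega⟩
      exact one_ne_zero h1
    · rw [Sym2.mk_isDiag_iff] at h
      have := congrArg (fun v : HexV r => v.1.val) h
      simp [spokeOutV, spokeInV] at this

@[simp] lemma hexGrid_ends_inl (r : ℕ) (i : Fin r) (j : ZMod (6 * (2 * i.val + 1))) :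
    (hexGrid r).ends (Sum.inl ⟨i, j⟩) = s((⟨i, j⟩ : HexV r), ⟨i, j + 1⟩) := rfl

@[simp] lemma hexGrid_ends_inr (r : ℕ) (i : Fin (r - 1)) (k : ZMod (6 * (i.val + 1))) :
    (hexGrid r).ends (Sum.inr ⟨i, k⟩) = s(spokeOutV r i k.val, spokeInV r i k.val) := rfl

/-- The `i`-th principal cycle of the hexagonal grid of radius `r` (`i` is 0-indexed,
so `i = ⟨0, _⟩` is the innermost principal cycle `C_1` of the paper and
`i = ⟨r-1, _⟩` the outermost one `C_r`). -/
def principalCycle (r : ℕ) (i : Fin r) : (hexGrid r).Subgraph where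
  verts := {v | v.1 = i}
  edges := {e | ∃ j, e = Sum.inl ⟨i, j⟩}
  closed := by
    rintro e ⟨j, rfl⟩ v hv
    have hv' : v = ⟨i, j⟩ ∨ v = ⟨i, j + 1⟩ := Sym2.mem_iff.mp hv
    rcases hv' with rfl | rfl <;> rfl

/-- The subgrid `H^i` of the hexagonal grid bounded by the `i`-th principal cycle:
the induced subgraph on the vertices of the principal cycles `C_1, …, C_i`. -/
def hexSubgridLE (r : ℕ) (i : Fin r) : (hexGrid r).Subgraph :=
  (hexGrid r).induce {v | v.1 ≤ i}

/-- The subgrid `H^i ∖ C_i` of the hexagonal grid: everything strictly inside the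
`i`-th principal cycle. -/
def hexSubgridLT (r : ℕ) (i : Fin r) : (hexGrid r).Subgraph :=
  (hexGrid r).induce {v | v.1 < i}

namespace TopEmb

variable {G : MGraph} {r : ℕ}

/-- An attachment of a topological embedding `h : H_r → G`: an `h(H_r)`-component of
`G` that intersects the interior `h(H_r ∖ C_r)` of `h(H_r)`. -/
def IsAttachment (h : TopEmb (hexGrid r) G) (C : G.Subgraph) : Prop :=
  G.IsHComp h.image C ∧
  (C.verts ∩ (h.imageOf ((hexGrid r).deleteVerts {v | v.1.val = r - 1})).verts).Nonempty

/-- A topological embedding `h : H_r → G` is flat if the union of `h(H_r)` with all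
its attachments is planar. -/
def Flat (h : TopEmb (hexGrid r) G) : Prop :=
  ((h.image.union (MGraph.Subgraph.sUnion {C | h.IsAttachment C})).toGraph).IsPlanar

/-- The subgraph `K_i` of `G`: the image `h(H^i)` together with all attachments of
`h(H_r)` that intersect the interior `h(H^i ∖ C_i)`. -/
def K (h : TopEmb (hexGrid r) G) (i : Fin r) : G.Subgraph :=
  (h.imageOf (hexSubgridLE r i)).union
    (MGraph.Subgraph.sUnion {C | h.IsAttachment C ∧
      (C.verts ∩ (h.imageOf (hexSubgridLT r i)).verts).Nonempty})

/-- The edge set `F_i`: all edges of `K_i` having at least one endpoint on `h(C_i)`. -/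
def Fset (h : TopEmb (hexGrid r) G) (i : Fin r) : Set G.E :=
  {e | e ∈ (h.K i).edges ∧ ∃ v ∈ G.ends e, v ∈ (h.imageOf (principalCycle r i)).verts}

/-- The subgraph `I_i = K_i ∖ h(C_i)`: delete from `K_i` all vertices of `h(C_i)` and
all edges incident with them. -/
def Iset (h : TopEmb (hexGrid r) G) (i : Fin r) : G.Subgraph :=
  (h.K i).delete (h.imageOf (principalCycle r i)).verts

end TopEmb
/-! ### Graph constructions -/

namespace MGraph

open Classical in
/-- The graph obtained from `G` by contracting the (induced) subgraph on a vertex set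
`A` to a single new vertex: all vertices of `A` and all edges with both endpoints in
`A` are deleted, a new vertex (the vertex `Sum.inr ()`) is added, and every edge with
exactly one endpoint in `A` now joins its other endpoint to the new vertex. -/
noncomputable def contract (G : MGraph) (A : Set G.V) : MGraph where
  V := {v : G.V // v ∉ A} ⊕ Unit
  E := {e : G.E // ∃ v ∈ G.ends e, v ∉ A}
  ends := fun e => (G.ends e.val).map
    (fun v => if h : v ∈ A then Sum.inr () else Sum.inl ⟨v, h⟩)
  loopless := by
    intro e he
    try dsimp only at he
    obtain ⟨v, hv, hvA⟩ := e.2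
    obtain ⟨⟨a, b⟩, hab⟩ := Quot.exists_rep (G.ends e.val)
    have hab' : G.ends e.val = s(a, b) := hab.symm
    have hne : a ≠ b := fun hh => G.loopless e.val (by rw [hab']; exact Sym2.mk_isDiag_iff.mpr hh)
    rw [hab'] at he hv
    rw [Sym2.map_pair_eq, Sym2.mk_isDiag_iff] at he
    rw [Sym2.mem_iff] at hv
    by_cases ha : a ∈ A <;> by_cases hb : b ∈ A
    · rcases hv with rfl | rfl <;> exact hvA (by assumption)
    · rw [dif_pos ha, dif_neg hb] at he; exact absurd he (by simp)
    · rw [dif_neg ha, dif_pos hb] at he; exact absurd he (by simp)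
    · rw [dif_neg ha, dif_neg hb] at he
      exact hne (congrArg Subtype.val (Sum.inl_injective he))

/-- The graph `G^{e₁ × e₂}` obtained from `G` by crossing the two distinct edges
`e₁` and `e₂`: delete `e₁` and `e₂`, add a new vertex (the vertex `Sum.inr ()`), and
add four new edges joining the new vertex to the two endpoints of `e₁` and to the two
endpoints of `e₂`. -/
def crossAt (G : MGraph) (e₁ e₂ : G.E) : MGraph where
  V := G.V ⊕ Unit
  E := {e : G.E // e ≠ e₁ ∧ e ≠ e₂} ⊕
    {p : Fin 2 × G.V // p.2 ∈ G.ends (if p.1 = 0 then e₁ else e₂)}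
  ends := fun f => match f with
    | .inl g => (G.ends g.val).map Sum.inl
    | .inr p => s(Sum.inl p.val.2, Sum.inr ())
  loopless := by
    rintro (g | p) h
    · exact G.loopless g.val ((Sym2.isDiag_map Sum.inl_injective).mp h)
    · rw [Sym2.mk_isDiag_iff] at h
      exact absurd h (by simp)

/-- A set `F` of edges of `G`, viewed as a set of edges of `G^{e₁ × e₂}` (only
meaningful when `e₁, e₂ ∉ F`). -/
def liftF (G : MGraph) (e₁ e₂ : G.E) (F : Set G.E) : Set (G.crossAt e₁ e₂).E :=
  {f | ∃ g : {e : G.E // e ≠ e₁ ∧ e ≠ e₂}, f = Sum.inl g ∧ g.val ∈ F}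

/-- The `j`-th vertex (for `0 ≤ j ≤ k`) on the path of length `k` replacing the
edge `e` in the subdivision of `G` in which every edge is subdivided `k - 1` times. -/
noncomputable def subdivVert (G : MGraph) (k : ℕ) (e : G.E) (j : ℕ) : G.V ⊕ (G.E × Fin (k - 1)) :=
  if h0 : j = 0 then Sum.inl (Quot.out (G.ends e)).1
  else if h : j < k then Sum.inr (e, ⟨j - 1, by omega⟩)
  else Sum.inl (Quot.out (G.ends e)).2

/-- The graph `G̃` obtained from `G` by subdividing every edge `k - 1` times, that
is, replacing every edge by a path of length `k` (for `k ≥ 1`). -/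
noncomputable def subdivide (G : MGraph) (k : ℕ) : MGraph where
  V := G.V ⊕ (G.E × Fin (k - 1))
  E := G.E × Fin k
  ends := fun p => s(G.subdivVert k p.1 p.2.val, G.subdivVert k p.1 (p.2.val + 1))
  loopless := by
    rintro ⟨e, j⟩ h
    dsimp only at h
    rw [Sym2.mk_isDiag_iff] at h
    have hj : j.val < k := j.isLt
    unfold subdivVert at h
    by_cases h0 : j.val = 0
    · rw [dif_pos h0] at h
      by_cases h1 : j.val + 1 < k
      · rw [dif_neg (by omega), dif_pos h1] at h
        exact absurd h (by simp)
      · rw [dif_neg (by omega), dif_neg (by omega)] at h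
        exact sym2_out_ne _ (G.loopless e) (Sum.inl_injective h)
    · rw [dif_neg h0, dif_pos hj] at h
      by_cases h1 : j.val + 1 < k
      · rw [dif_neg (by omega), dif_pos h1] at h
        have h3 := Sum.inr_injective h
        rw [Prod.mk.injEq] at h3
        have h2 : j.val - 1 = j.val + 1 - 1 := congrArg Fin.val h3.2
        omega
      · rw [dif_neg (by omega), dif_neg (by omega)] at h
        exact absurd h (by simp)

/-- The set of edges of the subdivision `G̃` of `G` arising from the subdivision of
an edge in `F`. -/
def subdivF (G : MGraph) (k : ℕ) (F : Set G.E) : Set (G.subdivide k).E :=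
  {p | p.1 ∈ F}

/-- The graph `G^{×ē}` obtained from `G` by successively crossing `e 0` with `e 1`,
`e 2` with `e 3`, …, `e (2l-2)` with `e (2l-1)` (for pairwise distinct edges
`e 0, …, e (2l-1)`): the crossed edges are deleted, `l` new vertices are added (one
for each pair), and each new vertex is joined by four new edges to the endpoints of
the two edges of its pair. -/
def multiCross (G : MGraph) (l : ℕ) (e : Fin (2 * l) → G.E) : MGraph where
  V := G.V ⊕ Fin l
  E := {f : G.E // ∀ i, f ≠ e i} ⊕ {p : Fin (2 * l) × G.V // p.2 ∈ G.ends (e p.1)}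
  ends := fun f => match f with
    | .inl g => (G.ends g.val).map Sum.inl
    | .inr p => s(Sum.inl p.val.2,
        (Sum.inr ⟨p.val.1.val / 2, by have := p.val.1.isLt; omega⟩ : G.V ⊕ Fin l))
  loopless := by
    rintro (g | p) h
    · exact G.loopless g.val ((Sym2.isDiag_map Sum.inl_injective).mp h)
    · rw [Sym2.mk_isDiag_iff] at h
      exact absurd h (by simp)

end MGraph

/-! ### Auxiliary development for the main theorem -/

namespace MGraph

variable {G : MGraph}

namespace Walk

/-- From membership in the support, extract a sub-walk to the end, with support and
edges inside the original walk. -/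
lemma drop_aux : ∀ {u v : G.V} (w : G.Walk u v) (x : G.V), x ∈ w.support →
    ∃ w' : G.Walk x v, (∀ y ∈ w'.support, y ∈ w.support) ∧
      (∀ f ∈ w'.edgeList, f ∈ w.edgeList)
  | u, _, .nil _, x, hx => by
      simp only [support, List.mem_singleton] at hx
      subst hx
      exact ⟨.nil _, by simp [support], by simp [edgeList]⟩
  | u, v, .cons e he p, x, hx => by
      rcases List.mem_cons.mp hx with rfl | hx
      · exact ⟨.cons e he p, fun y hy => hy, fun f hf => hf⟩
      · obtain ⟨w', hs, hE⟩ := drop_aux p x hx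
        exact ⟨w', fun y hy => List.mem_cons_of_mem _ (hs y hy),
          fun f hf => List.mem_cons_of_mem _ (hE f hf)⟩

/-- Dropping the beginning of a path: a sub-walk from `x ≠ u` to `v` avoiding `u`. -/
lemma drop_path : ∀ {u v : G.V} (w : G.Walk u v), w.support.Nodup → ∀ x, x ∈ w.support →
    x ≠ u → ∃ w' : G.Walk x v, (∀ y ∈ w'.support, y ∈ w.support) ∧ u ∉ w'.support ∧
      (∀ f ∈ w'.edgeList, f ∈ w.edgeList)
  | u, _, .nil _, _, x, hx, hxu => by
      simp only [support, List.mem_singleton] at hx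
      exact absurd hx hxu
  | u, v, .cons e he p, hnd, x, hx, hxu => by
      rcases List.mem_cons.mp hx with rfl | hx
      · exact absurd rfl hxu
      · obtain ⟨w', hs, hE⟩ := drop_aux p x hx
        have hu : u ∉ p.support := by
          simp only [support, List.nodup_cons] at hnd
          exact hnd.1
        exact ⟨w', fun y hy => List.mem_cons_of_mem _ (hs y hy),
          fun hyu => hu (hs u hyu),
          fun f hf => List.mem_cons_of_mem _ (hE f hf)⟩

/-- Taking the beginning of a path: a sub-walk from `u` to `x ≠ v` avoiding `v`. -/
lemma take_path : ∀ {u v : G.V} (w : G.Walk u v), w.support.Nodup → ∀ x, x ∈ w.support →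
    x ≠ v → ∃ w' : G.Walk u x, (∀ y ∈ w'.support, y ∈ w.support) ∧ v ∉ w'.support ∧
      (∀ f ∈ w'.edgeList, f ∈ w.edgeList)
  | u, _, .nil _, _, x, hx, hxv => by
      simp only [support, List.mem_singleton] at hx
      exact absurd hx hxv
  | u, v, .cons e he p, hnd, x, hx, hxv => by
      simp only [support, List.nodup_cons] at hnd
      rcases List.mem_cons.mp hx with rfl | hx
      · refine ⟨.nil _, by simp [support], ?_, by simp [edgeList]⟩
        simp only [support, List.mem_singleton]
        intro hvu
        exact hnd.1 (hvu ▸ p.end_mem_support)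
      · obtain ⟨w', hs, hv, hE⟩ := take_path p hnd.2 x hx hxv
        refine ⟨.cons e he w', ?_, ?_, ?_⟩
        · intro y hy
          rcases List.mem_cons.mp hy with rfl | hy
          · exact List.mem_cons_self
          · exact List.mem_cons_of_mem _ (hs y hy)
        · intro hvm
          rcases List.mem_cons.mp hvm with rfl | hvm
          · exact hnd.1 p.end_mem_support
          · exact hv hvm
        · intro f hf
          rcases List.mem_cons.mp hf with rfl | hf
          · exact List.mem_cons_self
          · exact List.mem_cons_of_mem _ (hE f hf)

end Walk

namespace Subgraph

/-- One-step adjacency inside a subgraph. -/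
def AdjIn (S : G.Subgraph) (x y : G.V) : Prop := ∃ e ∈ S.edges, G.ends e = s(x, y)

lemma adjIn_symm (S : G.Subgraph) : Symmetric S.AdjIn := by
  rintro x y ⟨e, he, hxy⟩
  exact ⟨e, he, by rw [hxy, Sym2.eq_swap]⟩

lemma adjIn_mem_left {S : G.Subgraph} {x y : G.V} (h : S.AdjIn x y) : x ∈ S.verts := by
  obtain ⟨e, he, hxy⟩ := h
  exact S.closed e he x (by rw [hxy]; exact Sym2.mem_mk_left _ _)

lemma adjIn_mem_right {S : G.Subgraph} {x y : G.V} (h : S.AdjIn x y) : y ∈ S.verts := by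
  obtain ⟨e, he, hxy⟩ := h
  exact S.closed e he y (by rw [hxy]; exact Sym2.mem_mk_right _ _)

lemma rtg_of_walk {S : G.Subgraph} : ∀ {u v : G.V} (w : G.Walk u v),
    (∀ e ∈ w.edgeList, e ∈ S.edges) → Relation.ReflTransGen S.AdjIn u v
  | _, _, .nil _, _ => Relation.ReflTransGen.refl
  | u, v, .cons e he p, hE =>
      Relation.ReflTransGen.head ⟨e, hE e (List.mem_cons_self), he⟩
        (rtg_of_walk p (fun f hf => hE f (List.mem_cons_of_mem _ hf)))

lemma reach_iff {S : G.Subgraph} {u v : G.V} :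
    S.Reach u v ↔ u ∈ S.verts ∧ Relation.ReflTransGen S.AdjIn u v := by
  constructor
  · rintro ⟨w, hV, hE⟩
    exact ⟨hV u w.start_mem_support, rtg_of_walk w hE⟩
  · rintro ⟨hu, hrt⟩
    refine Relation.ReflTransGen.head_induction_on hrt (fun hv => ?_)
      (fun {a b} hadj _ ih _ => ?_) hu
    · exact ⟨.nil _, by simpa [Walk.support] using hv, by simp [Walk.edgeList]⟩
    · obtain ⟨e, heS, hab⟩ := hadj
      obtain ⟨w, hV, hE⟩ := ih (adjIn_mem_right ⟨e, heS, hab⟩)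
      refine ⟨.cons e hab w, ?_, ?_⟩
      · intro x hx
        rcases List.mem_cons.mp hx with rfl | hx
        · exact adjIn_mem_left ⟨e, heS, hab⟩
        · exact hV x hx
      · intro f hf
        rcases List.mem_cons.mp hf with rfl | hf
        · exact heS
        · exact hE f hf

lemma reach_refl {S : G.Subgraph} {u : G.V} (hu : u ∈ S.verts) : S.Reach u u :=
  reach_iff.mpr ⟨hu, Relation.ReflTransGen.refl⟩

lemma mem_of_reach {S : G.Subgraph} {u v : G.V} (h : S.Reach u v) : v ∈ S.verts := by
  obtain ⟨w, hV, -⟩ := h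
  exact hV v w.end_mem_support

lemma reach_symm {S : G.Subgraph} {u v : G.V} (h : S.Reach u v) : S.Reach v u := by
  obtain ⟨hu, hrt⟩ := reach_iff.mp h
  exact reach_iff.mpr ⟨mem_of_reach h, (haveI : Std.Symm S.AdjIn := ⟨fun _ _ hh => S.adjIn_symm hh⟩; Std.Symm.symm _ _ hrt)⟩

lemma reach_trans {S : G.Subgraph} {u v w : G.V} (h1 : S.Reach u v) (h2 : S.Reach v w) :
    S.Reach u w := by
  obtain ⟨hu, hrt1⟩ := reach_iff.mp h1
  obtain ⟨-, hrt2⟩ := reach_iff.mp h2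
  exact reach_iff.mpr ⟨hu, hrt1.trans hrt2⟩

lemma reach_step {S : G.Subgraph} {u v : G.V} {e : G.E} (he : e ∈ S.edges)
    (huv : G.ends e = s(u, v)) : S.Reach u v :=
  reach_iff.mpr ⟨adjIn_mem_left ⟨e, he, huv⟩, Relation.ReflTransGen.single ⟨e, he, huv⟩⟩

lemma reach_mono {S T : G.Subgraph} (hv : S.verts ⊆ T.verts) (he : S.edges ⊆ T.edges)
    {u v : G.V} (h : S.Reach u v) : T.Reach u v := by
  obtain ⟨w, hV, hE⟩ := h
  exact ⟨w, fun x hx => hv (hV x hx), fun f hf => he (hE f hf)⟩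

lemma reach_of_walk {S : G.Subgraph} {u v : G.V} (w : G.Walk u v)
    (hV : ∀ x ∈ w.support, x ∈ S.verts) (hE : ∀ e ∈ w.edgeList, e ∈ S.edges) :
    S.Reach u v := ⟨w, hV, hE⟩

end Subgraph

end MGraph


/-! ### Connectivity of hexagonal subgrids -/

section HexConn

variable {r : ℕ}

open MGraph

lemma hex_cycle_edge_mem (t : Fin r) (j : Fin r) (hj : j ≤ t)
    (m : ZMod (6 * (2 * j.val + 1))) :
    (Sum.inl ⟨j, m⟩ : (hexGrid r).E) ∈ (hexSubgridLE r t).edges := by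
  intro v hv
  rw [hexGrid_ends_inl] at hv
  replace hv := Sym2.mem_iff.mp hv
  rcases hv with rfl | rfl <;> exact hj

lemma hex_lvl_reach (t : Fin r) (j : Fin r) (hj : j ≤ t) (m : ℕ) :
    (hexSubgridLE r t).Reach ⟨j, (m : ZMod (6 * (2 * j.val + 1)))⟩ ⟨j, 0⟩ := by
  induction m with
  | zero =>
      rw [Nat.cast_zero]
      exact Subgraph.reach_refl hj
  | succ m ih =>
      have hstep := Subgraph.reach_step (hex_cycle_edge_mem t j hj (m : ZMod _))
        (hexGrid_ends_inl r j (m : ZMod _))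
      rw [Nat.cast_succ]
      exact Subgraph.reach_trans (Subgraph.reach_symm hstep) ih

lemma hex_spoke_reach (t : Fin r) (n : ℕ) (hn : n + 1 ≤ t.val) :
    (hexSubgridLE r t).Reach
      ⟨⟨n + 1, by have := t.isLt; omega⟩, 1⟩ ⟨⟨n, by have := t.isLt; omega⟩, 0⟩ := by
  have hn' : n < r - 1 := by have := t.isLt; omega
  set i : Fin (r - 1) := ⟨n, hn'⟩ with hi
  have hval : ((0 : ZMod (6 * (i.val + 1)))).val = 0 := by
    haveI : NeZero (6 * (i.val + 1)) := ⟨by omega⟩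
    exact ZMod.val_zero
  have hout : spokeOutV r i 0 = ⟨⟨n, by have := t.isLt; omega⟩, 0⟩ := by
    simp [spokeOutV, hi]
  have hin : spokeInV r i 0 = ⟨⟨n + 1, by have := t.isLt; omega⟩, 1⟩ := by
    simp [spokeInV, hi]
  have hedge : (Sum.inr ⟨i, 0⟩ : (hexGrid r).E) ∈ (hexSubgridLE r t).edges := by
    intro v hv
    rw [hexGrid_ends_inr, hval, hout, hin] at hv
    replace hv := Sym2.mem_iff.mp hv
    rcases hv with rfl | rfl
    · show n ≤ t.val; omega
    · show n + 1 ≤ t.val; omega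
  have hends : (hexGrid r).ends (Sum.inr ⟨i, 0⟩) =
      s((⟨⟨n, by have := t.isLt; omega⟩, 0⟩ : HexV r),
        ⟨⟨n + 1, by have := t.isLt; omega⟩, 1⟩) := by
    rw [hexGrid_ends_inr, hval, hout, hin]
  exact Subgraph.reach_symm (Subgraph.reach_step hedge hends)

lemma hex_descend_reach (hr : 0 < r) (t : Fin r) :
    ∀ n (hn : n ≤ t.val),
      (hexSubgridLE r t).Reach ⟨⟨n, by have := t.isLt; omega⟩, 0⟩ ⟨⟨0, hr⟩, 0⟩ := by
  intro n
  induction n with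
  | zero =>
      intro _
      exact Subgraph.reach_refl (show (0 : ℕ) ≤ t.val from Nat.zero_le _)
  | succ n ih =>
      intro hn
      have h1 : (hexSubgridLE r t).Reach
          ⟨⟨n + 1, by have := t.isLt; omega⟩, 0⟩ ⟨⟨n + 1, by have := t.isLt; omega⟩, 1⟩ := by
        have := Subgraph.reach_symm
          (hex_lvl_reach t ⟨n + 1, by have := t.isLt; omega⟩ (by exact hn) 1)
        simpa using this
      exact Subgraph.reach_trans h1
        (Subgraph.reach_trans (hex_spoke_reach t n hn) (ih (by omega)))

lemma hexSubgridLE_reach (hr : 0 < r) (t : Fin r) :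
    ∀ v : HexV r, v.1 ≤ t → (hexSubgridLE r t).Reach v ⟨⟨0, hr⟩, 0⟩ := by
  rintro ⟨j, a⟩ hj
  haveI : NeZero (6 * (2 * j.val + 1)) := ⟨by omega⟩
  obtain ⟨m, hm⟩ := ZMod.natCast_zmod_surjective (n := 6 * (2 * j.val + 1)) a
  have h1 : (hexSubgridLE r t).Reach ⟨j, a⟩ ⟨j, 0⟩ := by
    rw [← hm]; exact hex_lvl_reach t j hj m
  have h2 := hex_descend_reach hr t j.val (by exact hj)
  have hjj : (⟨j.val, by have := t.isLt; omega⟩ : Fin r) = j := rfl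
  refine Subgraph.reach_trans h1 ?_
  convert h2 using 2

end HexConn




/-! ### Planarity is inherited by subgraphs -/

namespace MGraph.Subgraph

variable {G : MGraph} {S T : G.Subgraph}

/-- The inclusion of vertices of a smaller subgraph into a bigger one. -/
def inclV (hv : S.verts ⊆ T.verts) : S.toGraph.V → T.toGraph.V := fun v => ⟨v.val, hv v.2⟩

/-- The inclusion of edges of a smaller subgraph into a bigger one. -/
def inclE (he : S.edges ⊆ T.edges) : S.toGraph.E → T.toGraph.E := fun e => ⟨e.val, he e.2⟩

lemma inclV_inj (hv : S.verts ⊆ T.verts) : Function.Injective (inclV hv) :=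
  fun a b hh => Subtype.ext (congrArg Subtype.val hh : _)

lemma inclE_inj (he : S.edges ⊆ T.edges) : Function.Injective (inclE he) :=
  fun a b hh => Subtype.ext (congrArg Subtype.val hh : _)

lemma toGraph_ends_val (U : G.Subgraph) (e : U.toGraph.E) :
    Sym2.map Subtype.val (U.toGraph.ends e) = G.ends e.val :=
  Sym2.attachWith_map_subtypeVal _

/-- Restricting a drawing of a bigger subgraph to a smaller one. -/
def restrictDrawing (hv : S.verts ⊆ T.verts) (he : S.edges ⊆ T.edges)
    (Δ : Drawing T.toGraph) : Drawing S.toGraph where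
  vpos v := Δ.vpos (inclV hv v)
  par e := Δ.par (inclE he e)
  par_cont e := Δ.par_cont (inclE he e)
  par_inj e := Δ.par_inj (inclE he e)
  ends_match := by
    intro e
    obtain ⟨v, w, hvw, h0, h1⟩ := Δ.ends_match (inclE he e)
    have hGvw : G.ends e.val = s(v.val, w.val) := by
      have h2 := congrArg (Sym2.map Subtype.val) hvw
      rw [toGraph_ends_val T (inclE he e)] at h2
      exact h2.trans (Sym2.map_pair_eq Subtype.val v w)
    have hvS : v.val ∈ S.verts :=
      S.closed e.val e.2 v.val (by rw [hGvw]; exact Sym2.mem_mk_left _ _)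
    have hwS : w.val ∈ S.verts :=
      S.closed e.val e.2 w.val (by rw [hGvw]; exact Sym2.mem_mk_right _ _)
    refine ⟨⟨v.val, hvS⟩, ⟨w.val, hwS⟩, toGraph_ends e hGvw hvS hwS, ?_, ?_⟩
    · exact h0.trans (congrArg Δ.vpos (Subtype.ext rfl))
    · exact h1.trans (congrArg Δ.vpos (Subtype.ext rfl))
  vpos_inj := fun a b hab => inclV_inj hv (Δ.vpos_inj hab)
  arcs_inter := fun e f hef =>
    Δ.arcs_inter (inclE he e) (inclE he f) (fun hh => hef (inclE_inj he hh))
  vertex_on_arc := by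
    intro e v hve
    have h2 : Δ.vpos (inclV hv v) ∈ Δ.par (inclE he e) '' Set.Icc 0 1 := hve
    have h3 := Δ.vertex_on_arc (inclE he e) (inclV hv v) h2
    have h4 : v.val ∈ G.ends e.val := (toGraph_mem_ends (S := T) _ _).mp h3
    exact (toGraph_mem_ends (S := S) _ _).mpr h4
  at_most_two := by
    intro x hx e₁ e₂ e₃ h1 h2 h3
    by_cases hxr : x ∈ Set.range Δ.vpos
    · obtain ⟨w, hw⟩ := hxr
      have h4 : w ∈ T.toGraph.ends (inclE he e₁) :=
        Δ.vertex_on_arc (inclE he e₁) w (by rw [hw]; exact h1)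
      have hwS : w.val ∈ S.verts :=
        S.closed e₁.val e₁.2 _ ((toGraph_mem_ends (S := T) _ _).mp h4)
      exact absurd ⟨⟨w.val, hwS⟩,
        (congrArg Δ.vpos (Subtype.ext rfl : inclV hv ⟨w.val, hwS⟩ = w)).trans hw⟩ hx
    · rcases Δ.at_most_two x hxr _ _ _ h1 h2 h3 with hh | hh | hh
      · exact Or.inl (inclE_inj he hh)
      · exact Or.inr (Or.inl (inclE_inj he hh))
      · exact Or.inr (Or.inr (inclE_inj he hh))

lemma restrictDrawing_crossings (hv : S.verts ⊆ T.verts) (he : S.edges ⊆ T.edges)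
    (Δ : Drawing T.toGraph) (hΔ : Δ.crossings = ∅) :
    (restrictDrawing hv he Δ).crossings = ∅ := by
  rw [Set.eq_empty_iff_forall_notMem]
  rintro x ⟨hxr, e, f, hef, hxe, hxf⟩
  have hxe' : x ∈ Δ.arc (inclE he e) := hxe
  have hxf' : x ∈ Δ.arc (inclE he f) := hxf
  by_cases hxrT : x ∈ Set.range Δ.vpos
  · obtain ⟨w, hw⟩ := hxrT
    have h4 : w ∈ T.toGraph.ends (inclE he e) :=
      Δ.vertex_on_arc (inclE he e) w (by rw [hw]; exact hxe')
    have hwS : w.val ∈ S.verts :=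
      S.closed e.val e.2 _ ((toGraph_mem_ends (S := T) _ _).mp h4)
    exact hxr ⟨⟨w.val, hwS⟩,
      (congrArg Δ.vpos (Subtype.ext rfl : inclV hv ⟨w.val, hwS⟩ = w)).trans hw⟩
  · have hcr : x ∈ Δ.crossings :=
      ⟨hxrT, inclE he e, inclE he f, fun hh => hef (inclE_inj he hh), hxe', hxf'⟩
    rw [hΔ] at hcr
    exact hcr

lemma planar_mono (hv : S.verts ⊆ T.verts) (he : S.edges ⊆ T.edges)
    (hT : T.toGraph.IsPlanar) : S.toGraph.IsPlanar := by
  obtain ⟨Δ, hΔ⟩ := hT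
  exact ⟨restrictDrawing hv he Δ, restrictDrawing_crossings hv he Δ hΔ⟩

end MGraph.Subgraph


/-! ### Connectivity of attachment components -/

namespace MGraph

variable {G : MGraph}

lemma deleteVerts_verts (A : Set G.V) : (G.deleteVerts A).verts = Aᶜ := rfl

lemma attachComp_reach_delete (H : G.Subgraph) (u : G.V) (hu : u ∉ H.verts)
    (A : Set G.V) (hA : A ⊆ H.verts) :
    ∀ x ∈ (G.attachComp H u).verts, x ∉ A → ((G.attachComp H u).delete A).Reach u x := by
  set D := G.deleteVerts H.verts with hD
  set C := G.attachComp H u with hC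
  have huD : u ∈ D.verts := hu
  have claim1 : ∀ v, D.Reach u v → (C.delete A).Reach u v := by
    intro v hv
    obtain ⟨-, hrt⟩ := Subgraph.reach_iff.mp hv
    clear hv
    induction hrt with
    | refl =>
        refine Subgraph.reach_refl ⟨Or.inl (Subgraph.reach_refl huD), fun h => hu (hA h)⟩
    | tail h1 hadj ih =>
        obtain ⟨e, heD, hxy⟩ := hadj
        have hRx : D.Reach u _ := Subgraph.reach_iff.mpr ⟨huD, h1⟩
        have hRy : D.Reach u _ := Subgraph.reach_iff.mpr ⟨huD, h1.tail ⟨e, heD, hxy⟩⟩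
        have heC : e ∈ C.edges := by
          refine Or.inl ⟨heD, ?_⟩
          intro v hv
          rw [hxy, Sym2.mem_iff] at hv
          rcases hv with rfl | rfl
          · exact hRx
          · exact hRy
        have heC' : e ∈ (C.delete A).edges := by
          refine ⟨heC, fun v hv hvA => ?_⟩
          exact heD v hv (hA hvA)
        exact Subgraph.reach_trans ih (Subgraph.reach_step heC' hxy)
  rintro x (hx | ⟨hxH, e, w, hewx, hw⟩) hxA
  · exact claim1 x hx
  · have hwD : w ∈ D.verts := Subgraph.mem_of_reach hw
    have heC : e ∈ C.edges := Or.inr ⟨w, x, hewx, hw, hxH⟩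
    have heC' : e ∈ (C.delete A).edges := by
      refine ⟨heC, fun v hv hvA => ?_⟩
      rw [hewx, Sym2.mem_iff] at hv
      rcases hv with rfl | rfl
      · exact hwD (hA hvA)
      · exact hxA hvA
    exact Subgraph.reach_trans (claim1 w hw) (Subgraph.reach_step heC' hewx)

end MGraph

lemma sym2_eq_pair_of_two_mem {α : Type} {s : Sym2 α} {x y : α} (hx : x ∈ s) (hy : y ∈ s)
    (hxy : x ≠ y) : s = s(x, y) := by
  rw [sym2_out_eq s] at hx hy ⊢
  rw [Sym2.mem_iff] at hx hy
  rcases hx with rfl | rfl <;> rcases hy with rfl | rfl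
  · exact absurd rfl hxy
  · rfl
  · exact Sym2.eq_swap
  · exact absurd rfl hxy

/-! ### Lemmas about images of topological embeddings -/

namespace TopEmb

variable {Hg G : MGraph} (h : TopEmb Hg G)

lemma vmap_mem_imageOf {S : Hg.Subgraph} {a : Hg.V} (ha : a ∈ S.verts) :
    h.vmap a ∈ (h.imageOf S).verts :=
  Set.mem_union_left _ ⟨a, ha, rfl⟩

lemma pVerts_subset_imageOf {S : Hg.Subgraph} {e : Hg.E} (he : e ∈ S.edges) :
    h.pVerts e ⊆ (h.imageOf S).verts :=
  fun _ hx => Set.mem_union_right _ (Set.mem_biUnion he hx)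

lemma pEdges_subset_imageOf {S : Hg.Subgraph} {e : Hg.E} (he : e ∈ S.edges) :
    h.pEdges e ⊆ (h.imageOf S).edges :=
  fun _ hf => Set.mem_biUnion he hf

lemma vmap_mem_pVerts {e : Hg.E} {c : Hg.V} (hc : h.vmap c ∈ h.pVerts e) :
    c ∈ Hg.ends e := by
  by_contra hnc
  obtain ⟨a', b', w, hab', hpath, hV, hE, hlast⟩ := h.is_path e
  rw [hV] at hc
  exact hlast c hnc hc

lemma imageOf_reach_edge {S : Hg.Subgraph} {e : Hg.E} (he : e ∈ S.edges) {a b : Hg.V}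
    (hab : Hg.ends e = s(a, b)) :
    (h.imageOf S).Reach (h.vmap a) (h.vmap b) := by
  obtain ⟨a', b', w, hab', hpath, hV, hE, hlast⟩ := h.is_path e
  have hR : (h.imageOf S).Reach (h.vmap a') (h.vmap b') := by
    refine ⟨w, fun x hx => ?_, fun f hf => ?_⟩
    · exact h.pVerts_subset_imageOf he (by rw [hV]; exact hx)
    · exact h.pEdges_subset_imageOf he (by rw [hE]; exact hf)
  rw [hab] at hab'
  rcases Sym2.eq_iff.mp hab' with ⟨rfl, rfl⟩ | ⟨rfl, rfl⟩
  · exact hR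
  · exact MGraph.Subgraph.reach_symm hR

lemma imageOf_reach {S : Hg.Subgraph} {a b : Hg.V} (hr : S.Reach a b) :
    (h.imageOf S).Reach (h.vmap a) (h.vmap b) := by
  obtain ⟨ha, hrt⟩ := MGraph.Subgraph.reach_iff.mp hr
  clear hr
  induction hrt with
  | refl => exact MGraph.Subgraph.reach_refl (h.vmap_mem_imageOf ha)
  | tail h1 h2 ih =>
      obtain ⟨e, he, hends⟩ := h2
      exact MGraph.Subgraph.reach_trans ih (h.imageOf_reach_edge he hends)

lemma imageOf_vert_reach {S : Hg.Subgraph} {x : G.V} (hx : x ∈ (h.imageOf S).verts) :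
    ∃ a ∈ S.verts, (h.imageOf S).Reach x (h.vmap a) := by
  rcases hx with ⟨a, ha, rfl⟩ | hx
  · exact ⟨a, ha, MGraph.Subgraph.reach_refl (h.vmap_mem_imageOf ha)⟩
  · simp only [Set.mem_iUnion] at hx
    obtain ⟨e, he, hxe⟩ := hx
    obtain ⟨a', b', w, hab', hpath, hV, hE, hlast⟩ := h.is_path e
    rw [hV] at hxe
    obtain ⟨w', hs, hEsub⟩ := MGraph.Walk.drop_aux w x hxe
    refine ⟨b', S.closed e he b' (by rw [hab']; exact Sym2.mem_mk_right _ _), w', ?_, ?_⟩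
    · exact fun y hy => h.pVerts_subset_imageOf he (by rw [hV]; exact hs y hy)
    · exact fun f hf => h.pEdges_subset_imageOf he (by rw [hE]; exact hEsub f hf)

lemma imageOf_mono_verts {S T : Hg.Subgraph} (hv : S.verts ⊆ T.verts)
    (he : S.edges ⊆ T.edges) : (h.imageOf S).verts ⊆ (h.imageOf T).verts := by
  rintro x (⟨a, ha, rfl⟩ | hx)
  · exact h.vmap_mem_imageOf (hv ha)
  · simp only [Set.mem_iUnion] at hx
    obtain ⟨e, heS, hxe⟩ := hx
    exact h.pVerts_subset_imageOf (he heS) hxe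

lemma imageOf_mono_edges {S T : Hg.Subgraph} (he : S.edges ⊆ T.edges) :
    (h.imageOf S).edges ⊆ (h.imageOf T).edges := by
  intro f hf
  simp only [imageOf, Set.mem_iUnion] at hf ⊢
  obtain ⟨e, heS, hfe⟩ := hf
  exact ⟨e, he heS, hfe⟩

lemma pVerts_of_pEdges {e : Hg.E} {f : G.E} (hf : f ∈ h.pEdges e) {v : G.V}
    (hv : v ∈ G.ends f) : v ∈ h.pVerts e := by
  obtain ⟨a', b', w, hab', hpath, hV, hE, hlast⟩ := h.is_path e
  rw [hE] at hf
  rw [hV]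
  exact MGraph.Walk.mem_support_of_mem_edgeList w f v hf hv

lemma pVerts_inter_imageOf {T : Hg.Subgraph} {e : Hg.E} (heT : e ∉ T.edges) {y : G.V}
    (hy : y ∈ h.pVerts e) (hyT : y ∈ (h.imageOf T).verts) :
    ∃ c, c ∈ Hg.ends e ∧ c ∈ T.verts ∧ y = h.vmap c := by
  rcases hyT with ⟨c, hc, rfl⟩ | hyT
  · exact ⟨c, h.vmap_mem_pVerts hy, hc, rfl⟩
  · simp only [Set.mem_iUnion] at hyT
    obtain ⟨f, hfT, hyf⟩ := hyT
    have hef : e ≠ f := fun hh => heT (hh ▸ hfT)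
    obtain ⟨c, hce, hcf, rfl⟩ := h.int_disjoint e f hef y ⟨hy, hyf⟩
    exact ⟨c, hce, T.closed f hfT c hcf, rfl⟩

lemma imageOf_disjoint_verts {S T : Hg.Subgraph}
    (hv : ∀ a, a ∈ S.verts → a ∈ T.verts → False) {y : G.V}
    (hyS : y ∈ (h.imageOf S).verts) (hyT : y ∈ (h.imageOf T).verts) : False := by
  rcases hyS with ⟨a, ha, rfl⟩ | hyS
  · rcases hyT with ⟨c, hc, hvac⟩ | hyT
    · exact hv a ha (h.vmap_inj hvac ▸ hc)
    · simp only [Set.mem_iUnion] at hyT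
      obtain ⟨f, hfT, hyf⟩ := hyT
      exact hv a ha (T.closed f hfT a (h.vmap_mem_pVerts hyf))
  · simp only [Set.mem_iUnion] at hyS
    obtain ⟨e, heS, hye⟩ := hyS
    rcases hyT with ⟨c, hc, hvac⟩ | hyT
    · have : h.vmap c ∈ h.pVerts e := hvac ▸ hye
      exact hv c (S.closed e heS c (h.vmap_mem_pVerts this)) hc
    · simp only [Set.mem_iUnion] at hyT
      obtain ⟨f, hfT, hyf⟩ := hyT
      by_cases hef : e = f
      · subst hef
        exact hv _ (S.closed e heS _ (sym2_out_fst_mem _))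
          (T.closed e hfT _ (sym2_out_fst_mem _))
      · obtain ⟨c, hce, hcf, rfl⟩ := h.int_disjoint e f hef y ⟨hye, hyf⟩
        exact hv c (S.closed e heS c hce) (T.closed f hfT c hcf)

end TopEmb

lemma hexSubgridLT_eq {r : ℕ} (i : Fin r) (hi : 1 ≤ i.val) :
    hexSubgridLT r i = hexSubgridLE r ⟨i.val - 1, by have := i.isLt; omega⟩ := by
  unfold hexSubgridLT hexSubgridLE
  congr 1
  ext v
  simp only [Set.mem_setOf_eq, Fin.lt_def, Fin.le_def]
  omega

/-- For a flat topological embedding `h : H_r → G` and `2 ≤ i ≤ r`, both `K_i` and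
`I_i = K_i ∖ h(C_i)` are connected planar graphs.  (Principal cycles are 0-indexed
here: the index `i : Fin r` with `1 ≤ i.val` corresponds to the paper's index
`i.val + 1 ∈ {2, …, r}`.) -/
theorem K_and_I_connected_planar (r : ℕ) (hr : 2 ≤ r) (G : MGraph)
    (h : TopEmb (hexGrid r) G) (hflat : h.Flat) (i : Fin r) (hi : 1 ≤ i.val) :
    (h.K i).Connected ∧ (h.K i).toGraph.IsPlanar ∧
    (h.Iset i).Connected ∧ (h.Iset i).toGraph.IsPlanar := by
  have hr0 : 0 < r := by omega
  -- notation
  have hLTle_v : (hexSubgridLT r i).verts ⊆ (hexSubgridLE r i).verts :=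
    fun v hv => show v.1 ≤ i from le_of_lt (show v.1 < i from hv)
  have hLTle_e : (hexSubgridLT r i).edges ⊆ (hexSubgridLE r i).edges :=
    fun e he v hv => show v.1 ≤ i from le_of_lt (show v.1 < i from he v hv)
  -- base vertex
  have hbase_lt : ((⟨⟨0, hr0⟩, 0⟩ : HexV r)).1 < i := by
    rw [Fin.lt_def]; exact hi
  have hbase_le : ((⟨⟨0, hr0⟩, 0⟩ : HexV r)).1 ≤ i := le_of_lt hbase_lt
  set b0 : G.V := h.vmap ⟨⟨0, hr0⟩, 0⟩ with hb0
  -- K : inclusions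
  have hKv1 : (h.imageOf (hexSubgridLE r i)).verts ⊆ (h.K i).verts :=
    fun x hx => Set.mem_union_left _ hx
  have hKe1 : (h.imageOf (hexSubgridLE r i)).edges ⊆ (h.K i).edges :=
    fun x hx => Set.mem_union_left _ hx
  have hattK : ∀ C ∈ {C | h.IsAttachment C ∧
      (C.verts ∩ (h.imageOf (hexSubgridLT r i)).verts).Nonempty},
      C.verts ⊆ (h.K i).verts ∧ C.edges ⊆ (h.K i).edges := by
    intro C hC
    constructor
    · exact fun x hx => Set.mem_union_right _ (Set.mem_biUnion hC hx)
    · exact fun f hf => Set.mem_union_right _ (Set.mem_biUnion hC hf)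
  -- connectivity of the image of the LE-subgrid
  have hLEreach : ∀ x ∈ (h.imageOf (hexSubgridLE r i)).verts,
      (h.imageOf (hexSubgridLE r i)).Reach x b0 := by
    intro x hx
    obtain ⟨a, ha, hra⟩ := h.imageOf_vert_reach hx
    exact MGraph.Subgraph.reach_trans hra (h.imageOf_reach (hexSubgridLE_reach hr0 i a ha))
  have hb0LT : b0 ∈ (h.imageOf (hexSubgridLT r i)).verts := h.vmap_mem_imageOf hbase_lt
  have hb0LE : b0 ∈ (h.imageOf (hexSubgridLE r i)).verts := h.vmap_mem_imageOf hbase_le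
  -- K is connected
  have hKreach : ∀ x ∈ (h.K i).verts, (h.K i).Reach x b0 := by
    intro x hx
    rcases hx with hx | hx
    · exact MGraph.Subgraph.reach_mono hKv1 hKe1 (hLEreach x hx)
    · simp only [MGraph.Subgraph.sUnion, Set.mem_iUnion] at hx
      obtain ⟨C, hC, hxC⟩ := hx
      obtain ⟨hatt, v0, hv0C, hv0LT⟩ := hC
      have hCK := hattK C ⟨hatt, v0, hv0C, hv0LT⟩
      have hv0K : (h.K i).Reach v0 b0 :=
        MGraph.Subgraph.reach_mono hKv1 hKe1
          (hLEreach v0 (h.imageOf_mono_verts hLTle_v hLTle_e hv0LT))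
      refine MGraph.Subgraph.reach_trans ?_ hv0K
      rcases hatt.1 with ⟨u, huH, rfl⟩ | ⟨e, heH, hendsH, rfl⟩
      · have h1 := G.attachComp_reach_delete h.image u huH ∅ (Set.empty_subset _)
          x hxC (Set.notMem_empty x)
        have h2 := G.attachComp_reach_delete h.image u huH ∅ (Set.empty_subset _)
          v0 hv0C (Set.notMem_empty v0)
        have hsv : ((G.attachComp h.image u).delete ∅).verts ⊆ (h.K i).verts :=
          fun y hy => hCK.1 hy.1
        have hse : ((G.attachComp h.image u).delete ∅).edges ⊆ (h.K i).edges :=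
          fun f hf => hCK.2 hf.1
        exact MGraph.Subgraph.reach_trans
          (MGraph.Subgraph.reach_symm (MGraph.Subgraph.reach_mono hsv hse h1))
          (MGraph.Subgraph.reach_mono hsv hse h2)
      · by_cases hxv : x = v0
        · subst hxv
          exact MGraph.Subgraph.reach_refl (hCK.1 hv0C)
        · have hends : G.ends e = s(x, v0) := sym2_eq_pair_of_two_mem hxC hv0C hxv
          exact MGraph.Subgraph.reach_step (hCK.2 rfl) hends
  have hKconn : (h.K i).Connected := by
    refine ⟨⟨b0, hKv1 hb0LE⟩, fun u hu v hv => ?_⟩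
    exact MGraph.Subgraph.reach_trans (hKreach u hu)
      (MGraph.Subgraph.reach_symm (hKreach v hv))
  -- Planarity
  have hKU_v : (h.K i).verts ⊆
      (h.image.union (MGraph.Subgraph.sUnion {C | h.IsAttachment C})).verts := by
    rintro x (hx | hx)
    · exact Set.mem_union_left _
        (h.imageOf_mono_verts (fun x _ => Set.mem_univ x) (fun x _ => Set.mem_univ x) hx)
    · simp only [MGraph.Subgraph.sUnion, Set.mem_iUnion] at hx ⊢
      obtain ⟨C, hC, hxC⟩ := hx
      exact Set.mem_union_right _ (Set.mem_biUnion hC.1 hxC)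
  have hKU_e : (h.K i).edges ⊆
      (h.image.union (MGraph.Subgraph.sUnion {C | h.IsAttachment C})).edges := by
    rintro f (hf | hf)
    · exact Set.mem_union_left _ (h.imageOf_mono_edges (fun x _ => Set.mem_univ x) hf)
    · simp only [MGraph.Subgraph.sUnion, Set.mem_iUnion] at hf ⊢
      obtain ⟨C, hC, hfC⟩ := hf
      exact Set.mem_union_right _ (Set.mem_biUnion hC.1 hfC)
  have hKplanar : (h.K i).toGraph.IsPlanar :=
    MGraph.Subgraph.planar_mono hKU_v hKU_e hflat
  have hIK_v : (h.Iset i).verts ⊆ (h.K i).verts := fun x hx => hx.1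
  have hIK_e : (h.Iset i).edges ⊆ (h.K i).edges := fun f hf => hf.1
  have hIplanar : (h.Iset i).toGraph.IsPlanar :=
    MGraph.Subgraph.planar_mono hIK_v hIK_e hKplanar
  -- deleted vertex set facts
  have hdisj : ∀ y ∈ (h.imageOf (hexSubgridLT r i)).verts,
      y ∉ (h.imageOf (principalCycle r i)).verts := by
    intro y hy hyD
    refine h.imageOf_disjoint_verts (S := hexSubgridLT r i) (T := principalCycle r i)
      ?_ hy hyD
    intro a ha hpc
    have ha' : a.1 < i := ha
    have hpc' : a.1 = i := hpc
    rw [hpc'] at ha'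
    exact lt_irrefl _ ha'
  -- image of the open subgrid sits inside I
  have hLTsub_v : (h.imageOf (hexSubgridLT r i)).verts ⊆ (h.Iset i).verts := by
    intro x hx
    exact ⟨hKv1 (h.imageOf_mono_verts hLTle_v hLTle_e hx), hdisj x hx⟩
  have hLTsub_e : (h.imageOf (hexSubgridLT r i)).edges ⊆ (h.Iset i).edges := by
    intro f hf
    refine ⟨hKe1 (h.imageOf_mono_edges hLTle_e hf), ?_⟩
    intro v hv
    simp only [TopEmb.imageOf, Set.mem_iUnion] at hf
    obtain ⟨e, heLT, hfe⟩ := hf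
    exact hdisj v (h.pVerts_subset_imageOf heLT (h.pVerts_of_pEdges hfe hv))
  -- connectivity of the image of the open subgrid, inside I
  have hLTreach : ∀ x ∈ (h.imageOf (hexSubgridLT r i)).verts,
      (h.imageOf (hexSubgridLT r i)).Reach x b0 := by
    have hrw := hexSubgridLT_eq i hi
    rw [hrw]
    intro x hx
    obtain ⟨a, ha, hra⟩ := h.imageOf_vert_reach hx
    exact MGraph.Subgraph.reach_trans hra (h.imageOf_reach (hexSubgridLE_reach hr0 _ a ha))
  have hLTreach_I : ∀ x ∈ (h.imageOf (hexSubgridLT r i)).verts, (h.Iset i).Reach x b0 :=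
    fun x hx => MGraph.Subgraph.reach_mono hLTsub_v hLTsub_e (hLTreach x hx)
  -- connectivity of I
  have hIreach : ∀ x ∈ (h.Iset i).verts, (h.Iset i).Reach x b0 := by
    rintro x ⟨hxK, hxD⟩
    rcases hxK with hx | hx
    · -- x in the image of the LE-subgrid
      rcases hx with ⟨a, ha, rfl⟩ | hx
      · -- x = vmap a
        have ha' : a.1 < i := by
          rcases lt_or_eq_of_le (show a.1 ≤ i from ha) with hlt | heq
          · exact hlt
          · exact absurd (h.vmap_mem_imageOf (show a ∈ (principalCycle r i).verts from heq))
              hxD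
        exact hLTreach_I _ (h.vmap_mem_imageOf (show a.1 < i from ha'))
      · simp only [Set.mem_iUnion] at hx
        obtain ⟨e, heLE, hxe⟩ := hx
        obtain ⟨j, m⟩ | ⟨j, k⟩ := e
        · -- principal cycle edge at level j
          have hj : j ≤ i := heLE ⟨j, m⟩
            (by rw [hexGrid_ends_inl]; exact Sym2.mem_mk_left _ _)
          by_cases hji : j = i
          · subst hji
            exact absurd (h.pVerts_subset_imageOf (show _ ∈ (principalCycle r j).edges
              from ⟨m, rfl⟩) hxe) hxD
          · have hjlt : j < i := lt_of_le_of_ne hj hji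
            have heLT : (Sum.inl ⟨j, m⟩ : (hexGrid r).E) ∈ (hexSubgridLT r i).edges := by
              intro v hv
              rw [hexGrid_ends_inl] at hv
              replace hv := Sym2.mem_iff.mp hv
              rcases hv with rfl | rfl <;> exact hjlt
            exact hLTreach_I x (h.pVerts_subset_imageOf heLT hxe)
        · -- spoke edge between levels j and j+1
          have hj1 : j.val + 1 ≤ i.val := by
            have := heLE (spokeInV r j k.val)
              (by rw [hexGrid_ends_inr]; exact Sym2.mem_mk_right _ _)
            exact this
          by_cases hcase : j.val + 1 < i.val
          · have heLT : (Sum.inr ⟨j, k⟩ : (hexGrid r).E) ∈ (hexSubgridLT r i).edges := by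
              intro v hv
              rw [hexGrid_ends_inr] at hv
              replace hv := Sym2.mem_iff.mp hv
              rcases hv with rfl | rfl
              · show (j.val : ℕ) < i.val; omega
              · show (j.val + 1 : ℕ) < i.val; omega
            exact hLTreach_I x (h.pVerts_subset_imageOf heLT hxe)
          · have hji : j.val + 1 = i.val := by omega
            have hivPC : spokeInV r j k.val ∈ (principalCycle r i).verts :=
              show (spokeInV r j k.val).1 = i from Fin.val_injective hji
            have hlowLT : (spokeOutV r j k.val).1 < i := by
              show (j.val : ℕ) < i.val; omega
            have hePC : (Sum.inr ⟨j, k⟩ : (hexGrid r).E) ∉ (principalCycle r i).edges := by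
              rintro ⟨m, hm⟩
              exact Sum.inr_ne_inl hm
            have hxne : x ≠ h.vmap (spokeInV r j k.val) := by
              rintro rfl
              exact hxD (h.vmap_mem_imageOf hivPC)
            have honly : ∀ y ∈ h.pVerts (Sum.inr ⟨j, k⟩),
                y ∈ (h.imageOf (principalCycle r i)).verts →
                y = h.vmap (spokeInV r j k.val) := by
              intro y hy hyD
              obtain ⟨c, hce, hcPC, rfl⟩ := h.pVerts_inter_imageOf hePC hy hyD
              rw [hexGrid_ends_inr] at hce
              replace hce := Sym2.mem_iff.mp hce
              rcases hce with rfl | rfl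
              · have hcc : (j.val : ℕ) = i.val := congrArg Fin.val hcPC
                omega
              · rfl
            obtain ⟨a', b', w, hab', hpath, hV, hE, hlast⟩ := h.is_path (Sum.inr ⟨j, k⟩)
            rw [hexGrid_ends_inr] at hab'
            have hxsup : x ∈ w.support := by rw [hV] at hxe; exact hxe
            have hLEe : (Sum.inr ⟨j, k⟩ : (hexGrid r).E) ∈ (hexSubgridLE r i).edges := heLE
            rcases Sym2.eq_iff.mp hab' with ⟨hao, hbi⟩ | ⟨hbo, hai⟩
            · -- a' = out (low), b' = in (high)
              have hxnb : x ≠ h.vmap b' := by rw [hbi] at hxne; exact hxne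
              obtain ⟨w', hs, hnv, hEs⟩ := MGraph.Walk.take_path w hpath x hxsup hxnb
              have hwalk : (h.Iset i).Reach (h.vmap a') x := by
                refine ⟨w', fun y hy => ?_, fun f hf => ?_⟩
                · have hyP : y ∈ h.pVerts (Sum.inr ⟨j, k⟩) := by rw [hV]; exact hs y hy
                  refine ⟨hKv1 (h.pVerts_subset_imageOf hLEe hyP), fun hyD => ?_⟩
                  have := honly y hyP hyD
                  rw [hbi] at this
                  exact hnv (this ▸ hy)
                · have hfP : f ∈ h.pEdges (Sum.inr ⟨j, k⟩) := by rw [hE]; exact hEs f hf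
                  refine ⟨hKe1 (h.pEdges_subset_imageOf hLEe hfP), fun v hv hvD => ?_⟩
                  have hvsup := MGraph.Walk.mem_support_of_mem_edgeList w' f v hf hv
                  have hvP : v ∈ h.pVerts (Sum.inr ⟨j, k⟩) := by rw [hV]; exact hs v hvsup
                  have := honly v hvP hvD
                  rw [hbi] at this
                  exact hnv (this ▸ hvsup)
              refine MGraph.Subgraph.reach_trans (MGraph.Subgraph.reach_symm hwalk) ?_
              refine hLTreach_I _ (h.vmap_mem_imageOf ?_)
              rw [hao] at hlowLT
              exact hlowLT
            · -- a' = in (high), b' = out (low)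
              have hxna : x ≠ h.vmap a' := by rw [hai] at hxne; exact hxne
              obtain ⟨w', hs, hnv, hEs⟩ := MGraph.Walk.drop_path w hpath x hxsup hxna
              have hwalk : (h.Iset i).Reach x (h.vmap b') := by
                refine ⟨w', fun y hy => ?_, fun f hf => ?_⟩
                · have hyP : y ∈ h.pVerts (Sum.inr ⟨j, k⟩) := by rw [hV]; exact hs y hy
                  refine ⟨hKv1 (h.pVerts_subset_imageOf hLEe hyP), fun hyD => ?_⟩
                  have := honly y hyP hyD
                  rw [hai] at this
                  exact hnv (this ▸ hy)
                · have hfP : f ∈ h.pEdges (Sum.inr ⟨j, k⟩) := by rw [hE]; exact hEs f hf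
                  refine ⟨hKe1 (h.pEdges_subset_imageOf hLEe hfP), fun v hv hvD => ?_⟩
                  have hvsup := MGraph.Walk.mem_support_of_mem_edgeList w' f v hf hv
                  have hvP : v ∈ h.pVerts (Sum.inr ⟨j, k⟩) := by rw [hV]; exact hs v hvsup
                  have := honly v hvP hvD
                  rw [hai] at this
                  exact hnv (this ▸ hvsup)
              refine MGraph.Subgraph.reach_trans hwalk ?_
              refine hLTreach_I _ (h.vmap_mem_imageOf ?_)
              rw [hbo] at hlowLT
              exact hlowLT
    · -- x in an attachment
      simp only [MGraph.Subgraph.sUnion, Set.mem_iUnion] at hx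
      obtain ⟨C, hC, hxC⟩ := hx
      obtain ⟨hatt, v0, hv0C, hv0LT⟩ := hC
      have hCK := hattK C ⟨hatt, v0, hv0C, hv0LT⟩
      have hv0D : v0 ∉ (h.imageOf (principalCycle r i)).verts := hdisj v0 hv0LT
      have hDsub : (h.imageOf (principalCycle r i)).verts ⊆ h.image.verts :=
        h.imageOf_mono_verts (fun x _ => Set.mem_univ x) (fun x _ => Set.mem_univ x)
      refine MGraph.Subgraph.reach_trans ?_ (hLTreach_I v0 hv0LT)
      rcases hatt.1 with ⟨u, huH, rfl⟩ | ⟨e, heH, hendsH, rfl⟩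
      · have h1 := G.attachComp_reach_delete h.image u huH
          (h.imageOf (principalCycle r i)).verts hDsub x hxC hxD
        have h2 := G.attachComp_reach_delete h.image u huH
          (h.imageOf (principalCycle r i)).verts hDsub v0 hv0C hv0D
        have hsv : ((G.attachComp h.image u).delete
            (h.imageOf (principalCycle r i)).verts).verts ⊆ (h.Iset i).verts :=
          fun y hy => ⟨hCK.1 hy.1, hy.2⟩
        have hse : ((G.attachComp h.image u).delete
            (h.imageOf (principalCycle r i)).verts).edges ⊆ (h.Iset i).edges :=
          fun f hf => ⟨hCK.2 hf.1, hf.2⟩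
        exact MGraph.Subgraph.reach_trans
          (MGraph.Subgraph.reach_symm (MGraph.Subgraph.reach_mono hsv hse h1))
          (MGraph.Subgraph.reach_mono hsv hse h2)
      · by_cases hxv : x = v0
        · subst hxv
          exact MGraph.Subgraph.reach_refl ⟨hCK.1 hv0C, hxD⟩
        · have hends : G.ends e = s(x, v0) := sym2_eq_pair_of_two_mem hxC hv0C hxv
          have heI : e ∈ (h.Iset i).edges := by
            refine ⟨hCK.2 rfl, ?_⟩
            intro v hv
            rw [hends, Sym2.mem_iff] at hv
            rcases hv with rfl | rfl
            · exact hxD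
            · exact hv0D
          exact MGraph.Subgraph.reach_step heI hends
  have hIconn : (h.Iset i).Connected := by
    refine ⟨⟨b0, hLTsub_v hb0LT⟩, fun u hu v hv => ?_⟩
    exact MGraph.Subgraph.reach_trans (hIreach u hu)
      (MGraph.Subgraph.reach_symm (hIreach v hv))
  exact ⟨hKconn, hKplanar, hIconn, hIplanar⟩
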